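/- Let z₀ ∈ ℂ with |z₀| = 1, and let x, y ∈ ℂ with Im(x) > 0, Im(y) > 0 and x ≠ y. Then as t → 0⁺ (t real, t > 0), the limit of i·t·z₀·e^{ity}·C(z₀·e^{itx}, z₀·e^{ity}) exists and equals −1/(x−y) + 1/(conj(x) − y). (This is the dy-coefficient statement of the property that the pullback of the propagator under the maps φ_t(x) = z₀e^{itx} converges, as t → 0, to the Kontsevich propagator ω_K(x,y) = (2π)^{-1}(d arg(x−y) − d arg(conj(x)−y)) on the upper half-plane; the factor 1/(4πi) common to both sides has been dropped.) -/

import Mathlib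

open Complex Filter

/-- `C z w` is `4πi` times the coefficient of `dw` in the propagator 1-form `ω(z,w)`. -/
noncomputable def propC (z w : ℂ) : ℂ :=
  -(z - w)⁻¹ + (starRingEnd ℂ) z / (1 - (starRingEnd ℂ) z * w)

lemma key_slope (a : ℂ) :
    Tendsto (fun t : ℝ => (Complex.exp (Complex.I * t * a) - 1) / (t : ℂ))
      (nhdsWithin 0 (Set.Ioi 0)) (nhds (Complex.I * a)) := by
  have hf : HasDerivAt (fun t : ℝ => Complex.exp (Complex.I * t * a)) (Complex.I * a) 0 := by
    have h0 : HasDerivAt (fun t : ℝ => Complex.I * (t : ℂ) * a) (Complex.I * a) 0 := by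
      have := ((Complex.ofRealCLM.hasDerivAt (x := (0:ℝ))).const_mul Complex.I).mul_const a
      simpa using this
    simpa using h0.cexp
  have h := hasDerivAt_iff_tendsto_slope.mp hf
  have h2 := h.mono_left (nhdsWithin_mono _ (fun t ht => (ne_of_gt ht : t ≠ 0)))
  refine h2.congr (fun t => ?_)
  simp [slope, Complex.real_smul, div_eq_inv_mul]

/-- As `t → 0⁺`, the pullback of the propagator under `φ_t(x) = z₀ e^{itx}` converges to the
Kontsevich propagator on the upper half-plane: `dy`-coefficient statement. -/
theorem propagator_limit_kontsevich_dy (z₀ x y : ℂ) (hz₀ : ‖z₀‖ = 1)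
    (hx : 0 < x.im) (hy : 0 < y.im) (hxy : x ≠ y) :
    Tendsto
      (fun t : ℝ =>
        Complex.I * (t : ℂ) * z₀ * Complex.exp (Complex.I * (t : ℂ) * y) *
          propC (z₀ * Complex.exp (Complex.I * (t : ℂ) * x))
            (z₀ * Complex.exp (Complex.I * (t : ℂ) * y)))
      (nhdsWithin 0 (Set.Ioi 0))
      (nhds (-(1 / (x - y)) + 1 / ((starRingEnd ℂ) x - y))) := by
  set c := y - (starRingEnd ℂ) x with hc_def
  have hz0 : z₀ ≠ 0 := by
    intro h; rw [h] at hz₀; simp at hz₀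
  have hzz : (starRingEnd ℂ) z₀ * z₀ = 1 := by
    rw [mul_comm, Complex.mul_conj]
    norm_cast
    rw [Complex.normSq_eq_norm_sq, hz₀]; norm_num
  have hconj0 : (starRingEnd ℂ) z₀ = z₀⁻¹ := eq_inv_of_mul_eq_one_left hzz
  have hc0 : c ≠ 0 := by
    intro h
    have : c.im = 0 := by rw [h]; simp
    rw [hc_def] at this
    simp [Complex.sub_im, Complex.conj_im] at this
    linarith
  have hxy' : x - y ≠ 0 := sub_ne_zero.mpr hxy
  have hI : Complex.I ≠ 0 := Complex.I_ne_zero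
  have hd1 : Complex.I * x - Complex.I * y ≠ 0 := by
    rw [← mul_sub]; exact mul_ne_zero hI hxy'
  have hd2 : Complex.I * c ≠ 0 := mul_ne_zero hI hc0
  -- auxiliary continuous limits
  have hcy : Tendsto (fun t : ℝ => Complex.exp (Complex.I * t * y))
      (nhdsWithin 0 (Set.Ioi 0)) (nhds 1) := by
    have hcont : Continuous fun t : ℝ => Complex.exp (Complex.I * t * y) := by fun_prop
    have h : Tendsto (fun t : ℝ => Complex.exp (Complex.I * t * y)) (nhdsWithin 0 (Set.Ioi 0))
        (nhds (Complex.exp (Complex.I * (0:ℝ) * y))) :=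
      (hcont.tendsto 0).mono_left nhdsWithin_le_nhds
    simpa using h
  have hcx : Tendsto (fun t : ℝ => Complex.exp (-(Complex.I * t * (starRingEnd ℂ) x)))
      (nhdsWithin 0 (Set.Ioi 0)) (nhds 1) := by
    have hcont : Continuous fun t : ℝ => Complex.exp (-(Complex.I * t * (starRingEnd ℂ) x)) := by
      fun_prop
    have h : Tendsto (fun t : ℝ => Complex.exp (-(Complex.I * t * (starRingEnd ℂ) x)))
        (nhdsWithin 0 (Set.Ioi 0))
        (nhds (Complex.exp (-(Complex.I * (0:ℝ) * (starRingEnd ℂ) x)))) :=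
      (hcont.tendsto 0).mono_left nhdsWithin_le_nhds
    simpa using h
  -- the model function
  have hF : Tendsto (fun t : ℝ =>
      -Complex.I * Complex.exp (Complex.I * t * y) /
        ((Complex.exp (Complex.I * t * x) - 1) / t - (Complex.exp (Complex.I * t * y) - 1) / t)
      + -Complex.I * (Complex.exp (Complex.I * t * y) *
          Complex.exp (-(Complex.I * t * (starRingEnd ℂ) x))) /
        ((Complex.exp (Complex.I * t * c) - 1) / t))
      (nhdsWithin 0 (Set.Ioi 0))
      (nhds (-Complex.I * 1 / (Complex.I * x - Complex.I * y) +
        -Complex.I * (1 * 1) / (Complex.I * c))) := by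
    exact ((tendsto_const_nhds.mul hcy).div ((key_slope x).sub (key_slope y)) hd1).add
      ((tendsto_const_nhds.mul (hcy.mul hcx)).div (key_slope c) hd2)
  have hlim_eq : -Complex.I * 1 / (Complex.I * x - Complex.I * y) +
      -Complex.I * (1 * 1) / (Complex.I * c) = -(1 / (x - y)) + 1 / ((starRingEnd ℂ) x - y) := by
    have e1 : -Complex.I * 1 / (Complex.I * x - Complex.I * y) = -(1 / (x - y)) := by
      rw [← mul_sub]
      field_simp
    have e2 : -Complex.I * (1 * 1) / (Complex.I * c) = 1 / ((starRingEnd ℂ) x - y) := by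
      rw [show (starRingEnd ℂ) x - y = -c by rw [hc_def]; ring]
      field_simp
    rw [e1, e2]
  rw [← hlim_eq]
  refine Tendsto.congr' ?_ hF
  filter_upwards [self_mem_nhdsWithin,
    ((key_slope x).sub (key_slope y)).eventually_ne hd1,
    (key_slope c).eventually_ne hd2] with t ht h1 h2
  have ht0 : (t : ℂ) ≠ 0 := by
    exact_mod_cast ne_of_gt (show (0:ℝ) < t from ht)
  set E1 := Complex.exp (Complex.I * t * x) with hE1
  set E2 := Complex.exp (Complex.I * t * y) with hE2
  set E4 := Complex.exp (-(Complex.I * t * (starRingEnd ℂ) x)) with hE4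
  have hexpc : Complex.exp (Complex.I * t * c) = E2 * E4 := by
    rw [hE2, hE4, ← Complex.exp_add]
    congr 1
    rw [hc_def]; ring
  have hconjexp : (starRingEnd ℂ) (z₀ * E1) = z₀⁻¹ * E4 := by
    rw [map_mul, hconj0, hE1, hE4, ← Complex.exp_conj]
    congr 2
    simp [Complex.conj_ofReal]
  have hE12 : E1 - E2 ≠ 0 := by
    intro h
    apply h1
    rw [show (E1 - 1) / (t:ℂ) - (E2 - 1) / t = (E1 - E2) / t by ring, h, zero_div]
  have hE24 : E2 * E4 - 1 ≠ 0 := by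
    intro h
    apply h2
    rw [hexpc, h, zero_div]
  have hz12 : z₀ * E1 - z₀ * E2 ≠ 0 := by
    rw [← mul_sub]; exact mul_ne_zero hz0 hE12
  have hden2 : 1 - z₀⁻¹ * E4 * (z₀ * E2) = 1 - E4 * E2 := by
    rw [show z₀⁻¹ * E4 * (z₀ * E2) = (z₀⁻¹ * z₀) * (E4 * E2) by ring,
      inv_mul_cancel₀ hz0, one_mul]
  have hden2' : 1 - E4 * E2 ≠ 0 := by
    intro h
    apply hE24
    rw [show E2 * E4 - 1 = -(1 - E4 * E2) by ring, h, neg_zero]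
  simp only [propC]
  rw [hconjexp, hden2, hexpc,
    show (E1 - 1) / (t:ℂ) - (E2 - 1) / t = (E1 - E2) / t by ring]
  have hden2'' : 1 - E2 * E4 ≠ 0 := by rw [mul_comm]; exact hden2'
  field_simp
  ring
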